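/- Every matrix of the form M(α,β) (upper triangular, diagonal entries α^{2^{i-1}}, last column entries β and a_{i,n}(α^{2^i} - α^{2^{n-1}}), α ≠ 0) with α > 0 over ℝ lies in the image of the matrix exponential of the derivation family d_{σ,τ}: there exist σ, τ ∈ ℝ with exp(d_{σ,τ}) = M(α,β). In particular, exp(Der(E)) = { M(α,β) : α > 0, β ∈ ℝ } when a_{ij} = 0 for i+1 < j < n. -/

import Mathlib

open Matrix

/-- The derivation matrix `d_{σ,τ}`: diagonal `(σ, 2σ, …, 2^n σ)`, last column
`(τ, (2-2^n)σ a_1, …, (2^{n-1}-2^n)σ a_{n-1}, 2^n σ)`, zeros elsewhere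
(dimension `n+1`, 0-based indices). -/
def derMat17 (n : ℕ) (a : Fin (n+1) → ℝ) (σ τ : ℝ) : Matrix (Fin (n+1)) (Fin (n+1)) ℝ :=
  Matrix.of fun i j : Fin (n+1) =>
    if i = j then (2 : ℝ) ^ (i : ℕ) * σ
    else if j = Fin.last n then
      (if i = 0 then τ else ((2 : ℝ) ^ (i : ℕ) - 2 ^ n) * σ * a i)
    else 0

/-- The automorphism matrix `M(α,β)`: diagonal `α^{2^i}`, `(0,n)` entry `β`,
`(i,n)` entries `a_i(α^{2^i} - α^{2^n})`, zeros elsewhere. -/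
def autoMat17 (n : ℕ) (a : Fin (n+1) → ℝ) (α β : ℝ) : Matrix (Fin (n+1)) (Fin (n+1)) ℝ :=
  Matrix.of fun i j : Fin (n+1) =>
    if i = j then α ^ (2 ^ (i : ℕ))
    else if j = Fin.last n then
      (if i = 0 then β else a i * (α ^ (2 ^ (i : ℕ)) - α ^ (2 ^ n)))
    else 0


section Aux

variable {n : ℕ}

/-- rank-one matrix supported on the last column -/
def colMat (n : ℕ) (u : Fin (n+1) → ℝ) : Matrix (Fin (n+1)) (Fin (n+1)) ℝ :=
  vecMulVec u (Pi.single (Fin.last n) 1)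

lemma colMat_apply (u : Fin (n+1) → ℝ) (i j : Fin (n+1)) :
    colMat n u i j = if j = Fin.last n then u i else 0 := by
  simp only [colMat, vecMulVec_apply, Pi.single_apply]
  by_cases h : j = Fin.last n <;> simp [h]

lemma colMat_mul_colMat (u v : Fin (n+1) → ℝ) (hv : v (Fin.last n) = 0) :
    colMat n u * colMat n v = 0 := by
  ext i j
  simp only [mul_apply, colMat_apply, Matrix.zero_apply]
  rw [Finset.sum_eq_single (Fin.last n)]
  · simp [hv]
  · intro b _ hb; simp [hb]
  · simp

lemma diagonal_mul_colMat (f u : Fin (n+1) → ℝ) :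
    diagonal f * colMat n u = colMat n (fun i => f i * u i) := by
  ext i j
  simp [diagonal_mul, colMat_apply]

lemma colMat_mul_diagonal (f u : Fin (n+1) → ℝ) :
    colMat n u * diagonal f = colMat n (fun i => f (Fin.last n) * u i) := by
  ext i j
  rw [mul_diagonal]
  simp only [colMat_apply]
  by_cases hj : j = Fin.last n <;> simp [hj, mul_comm]

lemma conj_diag (f u : Fin (n+1) → ℝ) (hu : u (Fin.last n) = 0) :
    (1 + colMat n u) * diagonal f * (1 - colMat n u)
      = diagonal f + colMat n (fun i => (f (Fin.last n) - f i) * u i) := by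
  have h1 : colMat n u * diagonal f * colMat n u = 0 := by
    rw [colMat_mul_diagonal, colMat_mul_colMat _ _ hu]
  ext i j
  have expand : (1 + colMat n u) * diagonal f * (1 - colMat n u)
      = diagonal f + colMat n u * diagonal f - diagonal f * colMat n u
        - colMat n u * diagonal f * colMat n u := by
    noncomm_ring
  rw [expand, h1, sub_zero, colMat_mul_diagonal, diagonal_mul_colMat]
  simp only [Matrix.add_apply, Matrix.sub_apply, colMat_apply]
  by_cases hj : j = Fin.last n <;> simp [hj] <;> ring

lemma units_mul (u : Fin (n+1) → ℝ) (hu : u (Fin.last n) = 0) :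
    (1 + colMat n u) * (1 - colMat n u) = 1 ∧ (1 - colMat n u) * (1 + colMat n u) = 1 := by
  have h := colMat_mul_colMat u u hu
  constructor <;> (noncomm_ring; rw [h]; simp)

/-- key exponential computation -/
lemma exp_diag_plus_col (f u : Fin (n+1) → ℝ) (hu : u (Fin.last n) = 0) :
    NormedSpace.exp (diagonal f + colMat n (fun i => (f (Fin.last n) - f i) * u i))
      = diagonal (fun i => Real.exp (f i))
        + colMat n (fun i => (Real.exp (f (Fin.last n)) - Real.exp (f i)) * u i) := by
  obtain ⟨h1, h2⟩ := units_mul u hu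
  set U : (Matrix (Fin (n+1)) (Fin (n+1)) ℝ)ˣ := ⟨1 + colMat n u, 1 - colMat n u, h1, h2⟩
  have hUc : (U : Matrix (Fin (n+1)) (Fin (n+1)) ℝ) = 1 + colMat n u := rfl
  have hUinv : ((U⁻¹ : (Matrix (Fin (n+1)) (Fin (n+1)) ℝ)ˣ) : Matrix (Fin (n+1)) (Fin (n+1)) ℝ)
      = 1 - colMat n u := rfl
  have key : diagonal f + colMat n (fun i => (f (Fin.last n) - f i) * u i)
      = U * diagonal f * (U⁻¹ : (Matrix (Fin (n+1)) (Fin (n+1)) ℝ)ˣ) := by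
    rw [hUc, hUinv, conj_diag f u hu]
  rw [key, Matrix.exp_units_conj, Matrix.exp_diagonal]
  have hexp : NormedSpace.exp f = fun i => Real.exp (f i) := by
    funext i
    rw [Pi.coe_exp, Real.exp_eq_exp_ℝ]
  rw [hexp, hUc, hUinv, conj_diag _ u hu]

lemma exp_sq_zero {m : Type*} [Fintype m] [DecidableEq m] {A : Matrix m m ℝ} (h : A * A = 0) :
    NormedSpace.exp A = 1 + A := by
  rw [NormedSpace.exp_eq_tsum (𝕂 := ℝ)]
  have hpow : ∀ k, 2 ≤ k → A ^ k = 0 := by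
    intro k hk
    obtain ⟨j, rfl⟩ := Nat.exists_eq_add_of_le hk
    rw [pow_add, pow_two, h, zero_mul]
  dsimp only
  rw [tsum_eq_sum (s := Finset.range 2)]
  · simp [Finset.sum_range_succ, pow_zero, pow_one]
  · intro b hb
    simp only [Finset.mem_range, not_lt] at hb
    rw [hpow b hb, smul_zero]

lemma last_ne_zero (hn : 2 ≤ n) : (Fin.last n : Fin (n+1)) ≠ 0 := by
  simp [Fin.ext_iff, Fin.last]
  omega

lemma der_decomp (hn : 2 ≤ n) (a : Fin (n+1) → ℝ) (σ τ : ℝ) :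
    derMat17 n a σ τ = diagonal (fun i : Fin (n+1) => (2:ℝ)^(i:ℕ) * σ)
      + colMat n (fun i => if i = 0 then τ else if i = Fin.last n then 0
          else ((2:ℝ)^(i:ℕ) - 2^n) * σ * a i) := by
  ext i j
  simp only [derMat17, Matrix.of_apply, Matrix.add_apply, colMat_apply, diagonal_apply]
  by_cases hij : i = j
  · subst hij
    by_cases hil : i = Fin.last n
    · simp [hil, last_ne_zero hn]
    · simp [hil]
  · by_cases hj : j = Fin.last n
    · have : i ≠ Fin.last n := fun h => hij (h.trans hj.symm)
      simp [hij, hj, this]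
    · simp [hij, hj]

lemma auto_decomp (hn : 2 ≤ n) (a : Fin (n+1) → ℝ) (α β : ℝ) :
    autoMat17 n a α β = diagonal (fun i : Fin (n+1) => α ^ (2^(i:ℕ)))
      + colMat n (fun i => if i = 0 then β else if i = Fin.last n then 0
          else a i * (α^(2^(i:ℕ)) - α^(2^n))) := by
  ext i j
  simp only [autoMat17, Matrix.of_apply, Matrix.add_apply, colMat_apply, diagonal_apply]
  by_cases hij : i = j
  · subst hij
    by_cases hil : i = Fin.last n
    · simp [hil, last_ne_zero hn]
    · simp [hil]
  · by_cases hj : j = Fin.last n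
    · have : i ≠ Fin.last n := fun h => hij (h.trans hj.symm)
      simp [hij, hj, this]
    · simp [hij, hj]

/-- full exponential computation -/
lemma exp_der (hn : 2 ≤ n) (a : Fin (n+1) → ℝ) (σ τ : ℝ) :
    NormedSpace.exp (derMat17 n a σ τ)
      = autoMat17 n a (Real.exp σ)
          (if σ = 0 then τ
           else (Real.exp σ ^ 2^n - Real.exp σ) * (τ / (((2:ℝ)^n - 1) * σ))) := by
  have h2n : (1:ℝ) < 2^n := by
    have : (1:ℝ) = 2^0 := by norm_num
    rw [this]
    exact pow_lt_pow_right₀ one_lt_two (by omega)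
  have hlast : ((Fin.last n : Fin (n+1)) : ℕ) = n := rfl
  have hexppow : ∀ k : ℕ, Real.exp ((2:ℝ)^k * σ) = Real.exp σ ^ 2^k := by
    intro k
    rw [show ((2:ℝ)^k) = ((2^k : ℕ) : ℝ) by push_cast; ring, Real.exp_nat_mul]
  by_cases hσ : σ = 0
  · subst hσ
    simp only [if_pos rfl]
    rw [der_decomp hn, auto_decomp hn]
    have hd : (diagonal (fun i : Fin (n+1) => (2:ℝ)^(i:ℕ) * 0)) = 0 := by
      simp
    have hv : (fun i : Fin (n+1) => if i = 0 then τ else if i = Fin.last n then 0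
        else ((2:ℝ)^(i:ℕ) - 2^n) * 0 * a i)
        = (fun i => if i = 0 then τ else 0) := by
      funext i; by_cases h : i = 0 <;> simp [h]
    rw [hd, hv, zero_add]
    have hsq : colMat n (fun i : Fin (n+1) => if i = 0 then τ else 0)
        * colMat n (fun i : Fin (n+1) => if i = 0 then τ else 0) = 0 := by
      apply colMat_mul_colMat
      simp [last_ne_zero hn]
    rw [exp_sq_zero hsq]
    congr 1
    · ext i j
      simp [Real.exp_zero, diagonal_apply, Matrix.one_apply]
    · congr 1
      funext i
      by_cases h : i = 0 <;> by_cases h' : i = Fin.last n <;> simp [h, h']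
  · set u : Fin (n+1) → ℝ := fun i => if i = 0 then τ / (((2:ℝ)^n - 1) * σ)
        else if i = Fin.last n then 0 else -a i with hu_def
    have huL : u (Fin.last n) = 0 := by
      simp [hu_def, last_ne_zero hn]
    have hcoef : ((2:ℝ)^n - 1) * σ ≠ 0 :=
      mul_ne_zero (by linarith) hσ
    set f : Fin (n+1) → ℝ := fun i => (2:ℝ)^(i:ℕ) * σ with hf_def
    have hvec : (fun i : Fin (n+1) => if i = 0 then τ else if i = Fin.last n then 0
          else ((2:ℝ)^(i:ℕ) - 2^n) * σ * a i)
        = fun i => (f (Fin.last n) - f i) * u i := by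
      funext i
      by_cases h0 : i = 0
      · subst h0
        simp only [if_pos rfl, hu_def, hf_def, hlast]
        have h2n' : (2:ℝ)^n - 1 ≠ 0 := by linarith
        simp only [if_true]
        field_simp
        simp only [Fin.val_zero, pow_zero]
      · by_cases hL : i = Fin.last n
        · rw [hL]; simp [last_ne_zero hn, hu_def]
        · simp only [if_neg h0, if_neg hL, hu_def, hf_def, hlast]
          ring
    have hder : derMat17 n a σ τ = diagonal f
        + colMat n (fun i => (f (Fin.last n) - f i) * u i) := by
      rw [der_decomp hn, hvec]
    have hdiag : (fun i : Fin (n+1) => Real.exp (f i)) = fun i : Fin (n+1) => Real.exp σ ^ (2^(i:ℕ)) := by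
      funext i
      simp only [hf_def]
      exact hexppow _
    have hvec2 : (fun i : Fin (n+1) => (Real.exp (f (Fin.last n)) - Real.exp (f i)) * u i)
        = fun i => if i = 0 then (Real.exp σ ^ 2^n - Real.exp σ) * (τ / (((2:ℝ)^n - 1) * σ))
            else if i = Fin.last n then 0
            else a i * (Real.exp σ ^ (2^(i:ℕ)) - Real.exp σ ^ (2^n)) := by
      funext i
      by_cases h0 : i = 0
      · subst h0
        simp only [if_pos rfl, hu_def, hf_def, hlast, hexppow]
        norm_num
      · by_cases hL : i = Fin.last n
        · rw [hL]; simp [last_ne_zero hn, hu_def]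
        · simp only [if_neg h0, if_neg hL, hu_def, hf_def, hlast, hexppow]
          ring
    rw [hder, exp_diag_plus_col f u huL, auto_decomp hn, if_neg hσ, hdiag, hvec2]

end Aux

lemma main_surj {n : ℕ} (hn : 2 ≤ n) (a : Fin (n+1) → ℝ) :
    ∀ α β : ℝ, 0 < α → ∃ σ τ : ℝ, NormedSpace.exp (derMat17 n a σ τ) = autoMat17 n a α β := by
  intro α β hα
  by_cases h1 : α = 1
  · subst h1
    refine ⟨0, β, ?_⟩
    rw [exp_der hn a 0 β]
    norm_num
  · set σ := Real.log α with hσdef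
    have hσ : σ ≠ 0 := by
      intro h
      apply h1
      have := Real.exp_log hα
      rw [hσdef] at h
      rw [h, Real.exp_zero] at this
      exact this.symm
    have heσ : Real.exp σ = α := Real.exp_log hα
    have hcast : (((2:ℕ)^n : ℕ) : ℝ) = (2:ℝ)^n := by push_cast; ring
    have h2n : (1:ℝ) < 2^n := by
      have h10 : (1:ℝ) = 2^0 := by norm_num
      rw [h10]
      exact pow_lt_pow_right₀ one_lt_two (by omega)
    have hne : α ^ 2^n - α ≠ 0 := by
      intro h
      have h' : α ^ 2^n = α := sub_eq_zero.mp h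
      have hx : Real.exp ((((2:ℕ)^n : ℕ) : ℝ) * σ) = Real.exp σ := by
        rw [Real.exp_nat_mul, heσ]
        exact h'
      have h2 : (((2:ℕ)^n : ℕ) : ℝ) * σ = σ := Real.exp_injective hx
      have h3 : ((2:ℝ)^n - 1) * σ = 0 := by rw [← hcast]; linarith [h2]
      rcases mul_eq_zero.mp h3 with h4 | h4
      · linarith
      · exact hσ h4
    have hd : ((2:ℝ)^n - 1) * σ ≠ 0 := mul_ne_zero (by linarith) hσ
    have hβ : (α ^ 2^n - α) * (β * (((2:ℝ)^n - 1) * σ) / (α ^ 2^n - α) / (((2:ℝ)^n - 1) * σ))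
        = β := by
      have h2n' : (2:ℝ)^n - 1 ≠ 0 := by linarith
      field_simp
    refine ⟨σ, β * (((2:ℝ)^n - 1) * σ) / (α ^ 2^n - α), ?_⟩
    rw [exp_der hn a, if_neg hσ, heσ, hβ]

/-- every `M(α,β)` with `α > 0` is the exponential of some derivation
`d_{σ,τ}`; hence `exp(Der E) = {M(α,β) : α > 0}`. -/
theorem exp_der_image {n : ℕ} (hn : 2 ≤ n) (a : Fin (n+1) → ℝ) :
    (∀ α β : ℝ, 0 < α → ∃ σ τ : ℝ, NormedSpace.exp (derMat17 n a σ τ) = autoMat17 n a α β) ∧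
    {X : Matrix (Fin (n+1)) (Fin (n+1)) ℝ | ∃ σ τ : ℝ, X = NormedSpace.exp (derMat17 n a σ τ)}
      = {X | ∃ α β : ℝ, 0 < α ∧ X = autoMat17 n a α β} := by
  
  refine ⟨main_surj hn a, ?_⟩
  ext X
  simp only [Set.mem_setOf_eq]
  constructor
  · rintro ⟨σ, τ, rfl⟩
    exact ⟨Real.exp σ, _, Real.exp_pos σ, exp_der hn a σ τ⟩
  · rintro ⟨α, β, hα, rfl⟩
    obtain ⟨σ, τ, h⟩ := main_surj hn a α β hα
    exact ⟨σ, τ, h.symm⟩
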